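/- Let f : [λ]^2 → k, ρ an ordinal, and σ a finite sequence of colors. If x ⊆ λ is (ρ,σ)-good for f, then for every color i appearing in the range of σ there is a subset y ⊆ x that is i-homogeneous for f and has order type ρ. -/

import Mathlib

open Cardinal Ordinal

/-- The order type of a set of ordinals (an `Ordinal.{1}` for universe reasons). -/
noncomputable def otype (s : Set Ordinal.{0}) : Ordinal.{1} :=
  Ordinal.type (Subrel ((· < ·) : Ordinal → Ordinal → Prop) (· ∈ s))

/-- `OT s o` means the set of ordinals `s` has order type `o`. -/
def OT (s : Set Ordinal.{0}) (o : Ordinal.{0}) : Prop := otype s = Ordinal.lift.{1,0} o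

/-- `2^{<κ} = sup { 2^μ : μ < κ }`. -/
noncomputable def twoLT (κ : Cardinal.{0}) : Cardinal.{0} := ⨆ μ : Set.Iio κ, 2 ^ (μ : Cardinal)

/-- `X` is `i`-homogeneous for the pair coloring `f`. -/
def Homog {α : Type*} (f : Ordinal → Ordinal → α) (X : Set Ordinal) (i : α) : Prop :=
  ∀ a ∈ X, ∀ b ∈ X, a < b → f a b = i

/-- `Good f ρ σ x`: `x` is `(ρ,σ)`-good for the coloring `f`.  A singleton is `(ρ,⟨⟩)`-good;
`x` is `(ρ, σ⌢⟨i⟩)`-good iff `x = ⋃_{ξ<ρ} x_ξ` with each `x_ξ` `(ρ,σ)`-good,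
`sup x_ξ < inf x_η` for `ξ < η`, and all cross pairs colored `i`. -/
inductive Good (f : Ordinal → Ordinal → ℕ) (ρ : Ordinal.{0}) : List ℕ → Set Ordinal.{0} → Prop
  | nil (a : Ordinal) : Good f ρ [] {a}
  | cons (σ : List ℕ) (i : ℕ) (x : Ordinal → Set Ordinal)
      (hgood : ∀ ξ < ρ, Good f ρ σ (x ξ))
      (hsep : ∀ ξ < ρ, ∀ η < ρ, ξ < η → sSup (x ξ) < sInf (x η))
      (hcol : ∀ ξ < ρ, ∀ η < ρ, ξ < η → ∀ a ∈ x ξ, ∀ b ∈ x η, f a b = i) :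
      Good f ρ (σ ++ [i]) (⋃ ξ ∈ Set.Iio ρ, x ξ)

lemma good_nonempty {f ρ σ x} (hρ : (0:Ordinal) < ρ) (h : Good f ρ σ x) : x.Nonempty := by
  induction h with
  | nil a => exact ⟨a, rfl⟩
  | cons σ i x hg hsep hcol ih =>
    obtain ⟨a, ha⟩ := ih 0 hρ
    exact ⟨a, Set.mem_biUnion hρ ha⟩

lemma OT_empty : OT ∅ 0 := by
  unfold OT otype
  rw [Ordinal.lift_zero, Ordinal.type_eq_zero_iff_isEmpty]
  exact ⟨fun a => a.2⟩

lemma OT_image {g : Ordinal → Ordinal} {ρ : Ordinal}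
    (hmono : ∀ ξ < ρ, ∀ η < ρ, ξ < η → g ξ < g η) : OT (g '' Set.Iio ρ) ρ := by
  have hinj : Set.InjOn g (Set.Iio ρ) := by
    intro a ha b hb hab
    rcases lt_trichotomy a b with h | h | h
    · exact absurd hab (hmono a ha b hb h).ne
    · exact h
    · exact absurd hab.symm (hmono b hb a ha h).ne
  let e : Set.Iio ρ ≃ (g '' Set.Iio ρ) := Equiv.Set.imageOfInjOn g _ hinj
  have iso : Subrel ((· < ·) : Ordinal → Ordinal → Prop) (· ∈ Set.Iio ρ) ≃r
      Subrel ((· < ·) : Ordinal → Ordinal → Prop) (· ∈ g '' Set.Iio ρ) := by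
    refine ⟨e, ?_⟩
    rintro ⟨a, ha⟩ ⟨b, hb⟩
    have : g a < g b ↔ a < b := by
      constructor
      · intro h
        rcases lt_trichotomy a b with h' | h' | h'
        · exact h'
        · simp [h'] at h
        · exact absurd (hmono b hb a ha h') (not_lt.2 h.le)
      · exact hmono a ha b hb
    exact this
  unfold OT otype
  rw [Ordinal.type_eq.2 ⟨iso.symm⟩]
  exact typein_ordinal ρ

/-- If `x ⊆ λ` is `(ρ,σ)`-good, then for every color `i` in the range of `σ` there is
`y ⊆ x` that is `i`-homogeneous of order type `ρ`. -/
theorem good_homogeneous_subset (lam : Ordinal.{0}) (k : ℕ) (f : Ordinal → Ordinal → ℕ)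
    (hf : ∀ a b, f a b < k) (ρ : Ordinal.{0}) (σ : List ℕ)
    (x : Set Ordinal) (hx : x ⊆ Set.Iio lam) (hgood : Good f ρ σ x) :
    ∀ i ∈ σ, ∃ y ⊆ x, Homog f y i ∧ OT y ρ := by
  rcases eq_or_lt_of_le (zero_le (a := ρ)) with hρ | hρ
  · intro i hi
    refine ⟨∅, Set.empty_subset _, fun a ha => ha.elim, ?_⟩
    rw [← hρ]; exact OT_empty
  induction hgood with
  | nil a => intro i hi; exact absurd hi List.not_mem_nil
  | cons σ j x hg hsep hcol ih =>
    intro i hi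
    rcases List.mem_append.1 hi with hi | hi
    · -- recurse into x 0
      have h0 : (0:Ordinal) < ρ := hρ
      obtain ⟨y, hy, hhom, hot⟩ := ih 0 h0 (fun a ha => hx (Set.mem_biUnion h0 ha)) i hi
      exact ⟨y, fun a ha => Set.mem_biUnion h0 (hy ha), hhom, hot⟩
    · -- i = j : pick one element from each
      have hij : i = j := List.mem_singleton.1 hi
      subst hij
      have hne : ∀ ξ < ρ, (x ξ).Nonempty := fun ξ hξ => good_nonempty hρ (hg ξ hξ)
      classical
      set g : Ordinal → Ordinal := fun ξ => if h : ξ < ρ then (hne ξ h).choose else 0 with hgdef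
      have hgmem : ∀ ξ < ρ, g ξ ∈ x ξ := by
        intro ξ hξ; simp only [hgdef, dif_pos hξ]; exact (hne ξ hξ).choose_spec
      have hbdd : ∀ ξ < ρ, BddAbove (x ξ) :=
        fun ξ hξ => ⟨lam, fun a ha => le_of_lt (hx (Set.mem_biUnion hξ ha))⟩
      have hmono : ∀ ξ < ρ, ∀ η < ρ, ξ < η → g ξ < g η := by
        intro ξ hξ η hη hlt
        calc g ξ ≤ sSup (x ξ) := le_csSup (hbdd ξ hξ) (hgmem ξ hξ)
          _ < sInf (x η) := hsep ξ hξ η hη hlt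
          _ ≤ g η := csInf_le' (hgmem η hη)
      refine ⟨g '' Set.Iio ρ, ?_, ?_, OT_image hmono⟩
      · rintro a ⟨ξ, hξ, rfl⟩
        exact Set.mem_biUnion hξ (hgmem ξ hξ)
      · rintro a ⟨ξ, hξ, rfl⟩ b ⟨η, hη, rfl⟩ hab
        rcases lt_trichotomy ξ η with h | h | h
        · exact hcol ξ hξ η hη h _ (hgmem ξ hξ) _ (hgmem η hη)
        · subst h; exact absurd hab (lt_irrefl _)
        · exact absurd (hmono η hη ξ hξ h) (not_lt.2 hab.le)
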